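/- Coupling a decomposed objective-space: Let I be a finite index set and, for each i ∈ I, let A_i, B_i ⊆ ℝ^K be finite sets. Then ND(⋃_{i ∈ I} (A_i + B_i)) = ND(⋃_{i ∈ I} ND(ND(A_i) + ND(B_i))), where A + B denotes the Minkowski sum {a + b : a ∈ A, b ∈ B}. Hence, if the set of path weights of a network decomposes over a layer as ⋃_{i} (A_i + B_i), the Pareto frontier equals the nondominated set of the union of the couplings of the nondominated top-down and bottom-up label sets. -/

import Mathlib

open Pointwise

/-- `y` dominates `y'`: componentwise at least as large and not equal. -/
def dominates {K : ℕ} (y y' : Fin K → ℝ) : Prop :=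
  (∀ k, y' k ≤ y k) ∧ y ≠ y'

/-- The nondominated subset of `S`. -/
def ND {K : ℕ} (S : Set (Fin K → ℝ)) : Set (Fin K → ℝ) :=
  {y ∈ S | ¬ ∃ y' ∈ S, dominates y' y}


lemma ND_subset {K : ℕ} (S : Set (Fin K → ℝ)) : ND S ⊆ S := fun _ hy => hy.1

lemma exists_nd_ge {K : ℕ} {S : Set (Fin K → ℝ)} (hS : S.Finite) {a : Fin K → ℝ}
    (ha : a ∈ S) : ∃ m ∈ ND S, a ≤ m := by
  obtain ⟨m, hm, hmax⟩ := Set.Finite.exists_maximalFor id {z ∈ S | a ≤ z}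
      (hS.subset (fun z hz => hz.1)) ⟨a, ha, le_refl a⟩
  refine ⟨m, ⟨hm.1, ?_⟩, hm.2⟩
  rintro ⟨y', hy', hle, hne⟩
  exact hne (le_antisymm (hmax ⟨hy', hm.2.trans (fun k => hle k)⟩ (fun k => hle k)) (fun k => hle k))

lemma ND_congr {K : ℕ} {S T : Set (Fin K → ℝ)} (hTS : T ⊆ S)
    (h : ∀ y ∈ S, ∃ z ∈ T, y ≤ z) : ND S = ND T := by
  ext y
  constructor
  · rintro ⟨hyS, hnd⟩
    obtain ⟨z, hzT, hyz⟩ := h y hyS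
    have hyz' : y = z := by
      by_contra hne
      exact hnd ⟨z, hTS hzT, fun k => hyz k, Ne.symm hne⟩
    subst hyz'
    exact ⟨hzT, fun ⟨w, hwT, hd⟩ => hnd ⟨w, hTS hwT, hd⟩⟩
  · rintro ⟨hyT, hnd⟩
    refine ⟨hTS hyT, ?_⟩
    rintro ⟨z, hzS, hzd⟩
    obtain ⟨w, hwT, hzw⟩ := h z hzS
    refine hnd ⟨w, hwT, fun k => le_trans (hzd.1 k) (hzw k), ?_⟩
    rintro rfl
    exact hzd.2 (le_antisymm (fun k => hzw k) (fun k => hzd.1 k))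

/-- **Coupling a decomposed objective-space.**  For a finite index set `ι` and finite
sets `A i, B i ⊆ ℝ^K`,
`ND(⋃ i, (A i + B i)) = ND(⋃ i, ND(ND(A i) + ND(B i)))`,
where `+` is the Minkowski sum. -/
theorem ND_decomposed_coupling {K : ℕ} {ι : Type*} [Finite ι]
    (A B : ι → Set (Fin K → ℝ)) (hA : ∀ i, (A i).Finite) (hB : ∀ i, (B i).Finite) :
    ND (⋃ i, (A i + B i)) = ND (⋃ i, ND (ND (A i) + ND (B i))) := by
  apply ND_congr
  · refine Set.iUnion_mono fun i => ?_
    exact (ND_subset _).trans (Set.add_subset_add (ND_subset _) (ND_subset _))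
  · intro y hy
    obtain ⟨i, hyi⟩ := Set.mem_iUnion.mp hy
    obtain ⟨a, ha, b, hb, rfl⟩ := hyi
    obtain ⟨a', ha', haa'⟩ := exists_nd_ge (hA i) ha
    obtain ⟨b', hb', hbb'⟩ := exists_nd_ge (hB i) hb
    have hfin : (ND (A i) + ND (B i)).Finite :=
      Set.Finite.add ((hA i).subset (ND_subset _)) ((hB i).subset (ND_subset _))
    obtain ⟨m, hm, hlem⟩ := exists_nd_ge hfin (Set.add_mem_add ha' hb')
    exact ⟨m, Set.mem_iUnion.mpr ⟨i, hm⟩, le_trans (add_le_add haa' hbb') hlem⟩
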